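/- Let ŷ and p̂ be random variables with ŷ = σ(Z) and p = σ(z₀) for a fixed real z₀, where conditionally on an event A we have |Z - z₀| ≤ t almost surely for some t ≥ 0. Then on A, |σ(Z) - σ(z₀)| ≤ e^{t} p (1-p) |Z - z₀| and |σ(Z) - σ(z₀)| ≥ e^{-t} p (1-p) |Z - z₀| almost surely. -/

import Mathlib

open MeasureTheory

noncomputable def logisticSigmoid (z : ℝ) : ℝ := 1 / (1 + Real.exp (-z))

lemma sigmoid_hasDerivAt (x : ℝ) :
    HasDerivAt logisticSigmoid (logisticSigmoid x * (1 - logisticSigmoid x)) x := by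
  have hx : (0:ℝ) < 1 + Real.exp (-x) := by positivity
  have h1 : HasDerivAt (fun z : ℝ => Real.exp (-z)) (-Real.exp (-x)) x := by
    exact (hasDerivAt_neg x).exp.congr_deriv (by ring)
  have h2 : HasDerivAt (fun z : ℝ => 1 + Real.exp (-z)) (-Real.exp (-x)) x :=
    h1.const_add 1
  have h3 : HasDerivAt (fun z : ℝ => (1 + Real.exp (-z))⁻¹)
      (-(-Real.exp (-x)) / (1 + Real.exp (-x))^2) x := h2.inv hx.ne'
  have hfun : logisticSigmoid = fun z : ℝ => (1 + Real.exp (-z))⁻¹ :=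
    funext fun z => one_div _
  have heq : logisticSigmoid x * (1 - logisticSigmoid x)
      = -(-Real.exp (-x)) / (1 + Real.exp (-x))^2 := by
    unfold logisticSigmoid
    field_simp
    ring
  rw [heq, hfun]
  exact h3

/-- cosh-type expression for the sigmoid derivative. -/
lemma sigmoid_deriv_eq (x : ℝ) :
    logisticSigmoid x * (1 - logisticSigmoid x)
      = ((Real.exp (x/2) + Real.exp (-x/2))^2)⁻¹ := by
  have ha : (0:ℝ) < Real.exp (x/2) := Real.exp_pos _
  have r1 : Real.exp (-x/2) = (Real.exp (x/2))⁻¹ := by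
    rw [← Real.exp_neg]; congr 1; ring
  have r2 : Real.exp (-x) = (Real.exp (x/2))⁻¹ * (Real.exp (x/2))⁻¹ := by
    rw [← Real.exp_neg, ← Real.exp_add]; congr 1; ring
  unfold logisticSigmoid
  rw [r1, r2]
  have h1 : (0:ℝ) < 1 + (Real.exp (x/2))⁻¹ * (Real.exp (x/2))⁻¹ := by positivity
  field_simp
  ring

lemma sigmoid_deriv_nonneg (x : ℝ) :
    0 ≤ logisticSigmoid x * (1 - logisticSigmoid x) := by
  rw [sigmoid_deriv_eq]; positivity

lemma sq_comp_aux (e E a b : ℝ) (ha : 0 < a) (hb : 0 ≤ e * b)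
    (h : a ≤ e * b) (he : e * e = E) : a^2 ≤ E * b^2 := by
  nlinarith [mul_le_mul h h ha.le hb]

lemma sig_deriv_comp (t x y : ℝ) (h : |x - y| ≤ t) :
    Real.exp (-t) * (logisticSigmoid y * (1 - logisticSigmoid y))
      ≤ logisticSigmoid x * (1 - logisticSigmoid x) ∧
    logisticSigmoid x * (1 - logisticSigmoid x)
      ≤ Real.exp t * (logisticSigmoid y * (1 - logisticSigmoid y)) := by
  set cx := Real.exp (x/2) + Real.exp (-x/2) with hcx
  set cy := Real.exp (y/2) + Real.exp (-y/2) with hcy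
  have hcxp : 0 < cx := by positivity
  have hcyp : 0 < cy := by positivity
  have h1 : x - y ≤ t := (abs_le.mp h).2
  have h2 : y - x ≤ t := by have := (abs_le.mp h).1; linarith
  have key : ∀ a b : ℝ, a - b ≤ t → b - a ≤ t →
      Real.exp (a/2) + Real.exp (-a/2)
        ≤ Real.exp (t/2) * (Real.exp (b/2) + Real.exp (-b/2)) := by
    intro a b hab hba
    have k1 : Real.exp (a/2) ≤ Real.exp (t/2) * Real.exp (b/2) := by
      rw [← Real.exp_add]; exact Real.exp_le_exp.mpr (by linarith)
    have k2 : Real.exp (-a/2) ≤ Real.exp (t/2) * Real.exp (-b/2) := by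
      rw [← Real.exp_add]; exact Real.exp_le_exp.mpr (by linarith)
    calc Real.exp (a/2) + Real.exp (-a/2)
        ≤ Real.exp (t/2) * Real.exp (b/2) + Real.exp (t/2) * Real.exp (-b/2) := by linarith
      _ = Real.exp (t/2) * (Real.exp (b/2) + Real.exp (-b/2)) := by ring
  have hxy : cx ≤ Real.exp (t/2) * cy := key x y h1 h2
  have hyx : cy ≤ Real.exp (t/2) * cx := key y x h2 h1
  have het : Real.exp (t/2) * Real.exp (t/2) = Real.exp t := by
    rw [← Real.exp_add]; congr 1; ring
  have hep : (0:ℝ) < Real.exp (t/2) := Real.exp_pos _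
  have hsq1 : cx^2 ≤ Real.exp t * cy^2 :=
    sq_comp_aux _ _ _ _ hcxp (by positivity) hxy het
  have hsq2 : cy^2 ≤ Real.exp t * cx^2 :=
    sq_comp_aux _ _ _ _ hcyp (by positivity) hyx het
  rw [sigmoid_deriv_eq, sigmoid_deriv_eq]
  constructor
  · have : (Real.exp t * cx^2)⁻¹ ≤ (cy^2)⁻¹ :=
      inv_anti₀ (by positivity) hsq2
    calc Real.exp (-t) * (cy^2)⁻¹ = (Real.exp t * cy^2)⁻¹ := by
          rw [Real.exp_neg, mul_inv]
      _ ≤ (cx^2)⁻¹ := inv_anti₀ (by positivity) hsq1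
  · calc (cx^2)⁻¹ ≤ (Real.exp (-t) * cy^2)⁻¹ := by
          apply inv_anti₀ (by positivity)
          rw [Real.exp_neg]
          rw [inv_mul_le_iff₀ (Real.exp_pos t)]
          exact hsq2
      _ = Real.exp t * (cy^2)⁻¹ := by
          rw [mul_inv, ← Real.exp_neg, neg_neg]

lemma sig_mvt_pt (z₀ z : ℝ) (hne : z ≠ z₀) :
    ∃ ξ, |ξ - z₀| ≤ |z - z₀| ∧
      logisticSigmoid z - logisticSigmoid z₀
        = (logisticSigmoid ξ * (1 - logisticSigmoid ξ)) * (z - z₀) := by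
  rcases hne.lt_or_gt with hlt | hlt
  · obtain ⟨ξ, hξ, hslope⟩ := exists_hasDerivAt_eq_slope logisticSigmoid
      (fun x => logisticSigmoid x * (1 - logisticSigmoid x)) hlt
      (fun x _ => (sigmoid_hasDerivAt x).continuousAt.continuousWithinAt)
      (fun x _ => sigmoid_hasDerivAt x)
    refine ⟨ξ, ?_, ?_⟩
    · rw [abs_of_nonpos (by linarith [hξ.2] : ξ - z₀ ≤ 0),
        abs_of_nonpos (by linarith : z - z₀ ≤ 0)]
      linarith [hξ.1]
    · have hz : z₀ - z ≠ 0 := by intro h; apply hne; linarith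
      field_simp at hslope
      linarith [hslope]
  · obtain ⟨ξ, hξ, hslope⟩ := exists_hasDerivAt_eq_slope logisticSigmoid
      (fun x => logisticSigmoid x * (1 - logisticSigmoid x)) hlt
      (fun x _ => (sigmoid_hasDerivAt x).continuousAt.continuousWithinAt)
      (fun x _ => sigmoid_hasDerivAt x)
    refine ⟨ξ, ?_, ?_⟩
    · rw [abs_of_nonneg (by linarith [hξ.1] : (0:ℝ) ≤ ξ - z₀),
        abs_of_nonneg (by linarith : (0:ℝ) ≤ z - z₀)]
      linarith [hξ.2]
    · have hz : z - z₀ ≠ 0 := by intro h; apply hne; linarith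
      field_simp at hslope
      linarith [hslope]

lemma sig_bounds_pt (z₀ t z : ℝ) (hz : |z - z₀| ≤ t) :
    |logisticSigmoid z - logisticSigmoid z₀| ≤
        Real.exp t * (logisticSigmoid z₀ * (1 - logisticSigmoid z₀)) * |z - z₀| ∧
      Real.exp (-t) * (logisticSigmoid z₀ * (1 - logisticSigmoid z₀)) * |z - z₀| ≤
        |logisticSigmoid z - logisticSigmoid z₀| := by
  by_cases hne : z = z₀
  · subst hne; simp
  · obtain ⟨ξ, hξ, heq⟩ := sig_mvt_pt z₀ z hne
    have habs : |logisticSigmoid z - logisticSigmoid z₀|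
        = (logisticSigmoid ξ * (1 - logisticSigmoid ξ)) * |z - z₀| := by
      rw [heq, abs_mul, abs_of_nonneg (sigmoid_deriv_nonneg ξ)]
    have hξt : |ξ - z₀| ≤ t := hξ.trans hz
    obtain ⟨hlow, hhigh⟩ := sig_deriv_comp t ξ z₀ hξt
    rw [habs]
    exact ⟨mul_le_mul_of_nonneg_right hhigh (abs_nonneg _),
      mul_le_mul_of_nonneg_right hlow (abs_nonneg _)⟩

/-- if on an event `A` we have `|Z - z₀| ≤ t` a.s. with `t ≥ 0`,
then, with `p = σ(z₀)`, almost surely on `A`,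
`e^{-t} p (1-p) |Z - z₀| ≤ |σ(Z) - σ(z₀)| ≤ e^{t} p (1-p) |Z - z₀|`. -/
theorem sigmoid_mvt_bounds_on_event
    {Ω : Type*} [MeasurableSpace Ω] (P : Measure Ω) [IsProbabilityMeasure P]
    (A : Set Ω) (hA : MeasurableSet A)
    (Z : Ω → ℝ) (hZ : Measurable Z)
    (z₀ t : ℝ) (ht : 0 ≤ t)
    (p : ℝ) (hp : p = logisticSigmoid z₀)
    (hclose : ∀ᵐ ω ∂P, ω ∈ A → |Z ω - z₀| ≤ t) :
    ∀ᵐ ω ∂P, ω ∈ A →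
      |logisticSigmoid (Z ω) - logisticSigmoid z₀| ≤
          Real.exp t * (p * (1 - p)) * |Z ω - z₀| ∧
        Real.exp (-t) * (p * (1 - p)) * |Z ω - z₀| ≤
          |logisticSigmoid (Z ω) - logisticSigmoid z₀| := by
  filter_upwards [hclose] with ω hω hmem
  subst hp
  exact sig_bounds_pt z₀ t (Z ω) (hω hmem)
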